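/- arXiv:2409.15965 — 2 statements merged into one kernel-verified Lean document; each statement's English description precedes it below -/
import Mathlib

section
/- If μ = μ₁ ⊗ μ₂ ⊗ ⋯ ⊗ μ_d is a product of univariate probability measures on ℝ^d, then the coordinate-wise Christoffel polynomial factorizes: Λ_n^μ(x) = ∏_{i=1}^d Λ_n^{μ_i}(x_i) for all x ∈ ℝ^d and all n ∈ ℕ. -/
open MeasureTheory MvPolynomial

section Stmt2Aux

lemma stmt2_integrable_of_compact {α : Type*} [MeasurableSpace α] [TopologicalSpace α]
    [OpensMeasurableSpace α] {ν : Measure α} [IsFiniteMeasure ν] {K : Set α}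
    (hK : IsCompact K) (hν : ν Kᶜ = 0) {f : α → ℝ} (hf : Continuous f) :
    Integrable f ν := by
  obtain ⟨C, hC⟩ := hK.exists_bound_of_continuousOn hf.continuousOn
  refine Integrable.mono' (integrable_const C) hf.aestronglyMeasurable ?_
  have hae : ∀ᵐ x ∂ν, x ∈ K := by
    rw [ae_iff]
    exact hν
  filter_upwards [hae] with x hx using hC x hx

lemma stmt2_integral_cs {α : Type*} [MeasurableSpace α] (ν : Measure α) (f g : α → ℝ)
    (hfg : Integrable (fun x => f x * g x) ν) (hf : Integrable (fun x => f x ^ 2) ν)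
    (hg : Integrable (fun x => g x ^ 2) ν) (hgpos : 0 < ∫ x, g x ^ 2 ∂ν) :
    (∫ x, f x * g x ∂ν) ^ 2 ≤ (∫ x, f x ^ 2 ∂ν) * (∫ x, g x ^ 2 ∂ν) := by
  set A := ∫ x, f x ^ 2 ∂ν with hA
  set B := ∫ x, f x * g x ∂ν with hB
  set Cq := ∫ x, g x ^ 2 ∂ν with hCq
  set t := B / Cq with ht
  have h0 : 0 ≤ ∫ x, (f x - t * g x) ^ 2 ∂ν := integral_nonneg fun x => sq_nonneg _
  have hexp : (fun x => (f x - t * g x) ^ 2)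
      = fun x => (f x ^ 2 - (2 * t) * (f x * g x)) + t ^ 2 * g x ^ 2 := by
    funext x; ring
  have hI1 : Integrable (fun x => f x ^ 2 - 2 * t * (f x * g x)) ν :=
    hf.sub (hfg.const_mul (2 * t))
  have hI2 : Integrable (fun x => t ^ 2 * g x ^ 2) ν := hg.const_mul (t ^ 2)
  have hval : ∫ x, (f x - t * g x) ^ 2 ∂ν = A - 2 * t * B + t ^ 2 * Cq := by
    simp only [hexp]
    rw [integral_add hI1 hI2, integral_sub hf (hfg.const_mul (2 * t)),
      integral_const_mul, integral_const_mul]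
  rw [hval] at h0
  have hCq0 : Cq ≠ 0 := ne_of_gt hgpos
  have h1 : A - B ^ 2 / Cq ≥ 0 := by
    have h2 : 2 * t * B = 2 * (B ^ 2 / Cq) := by rw [ht]; ring
    have h3 : t ^ 2 * Cq = B ^ 2 / Cq := by rw [ht]; field_simp
    nlinarith [h0]
  have := (div_le_iff₀ hgpos).mp (by linarith : B ^ 2 / Cq ≤ A)
  linarith

lemma stmt2_integral_pi_prod : ∀ {d : ℕ} (μ : Fin d → Measure ℝ) [∀ i, SigmaFinite (μ i)]
    (f : Fin d → ℝ → ℝ),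
    ∫ y : Fin d → ℝ, ∏ i, f i (y i) ∂Measure.pi μ = ∏ i, ∫ s, f i s ∂μ i := by
  intro d
  induction d with
  | zero =>
      intro μ _ f
      simp [integral_const, Measure.pi_univ, measureReal_def]
  | succ m ih =>
      intro μ _ f
      calc
        _ = ∫ x : ℝ × (Fin m → ℝ), f 0 x.1 * ∏ i : Fin m, f (Fin.succ i) (x.2 i)
              ∂((μ 0).prod (Measure.pi fun j => μ ((0 : Fin (m+1)).succAbove j))) := by
          rw [← ((MeasureTheory.measurePreserving_piFinSuccAbove μ 0).symm).integral_comp'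
            (fun y : Fin (m+1) → ℝ => ∏ i, f i (y i))]
          simp_rw [MeasurableEquiv.piFinSuccAbove_symm_apply, Fin.insertNthEquiv,
            Fin.prod_univ_succ, Fin.insertNth_zero, Equiv.coe_fn_mk, Fin.cons_succ,
            Fin.zero_succAbove, Fin.cons_zero, cast_eq]
        _ = (∫ s, f 0 s ∂μ 0) * ∏ i : Fin m, ∫ s, f (Fin.succ i) s ∂μ (Fin.succ i) := by
          rw [← ih _ _, ← integral_prod_mul]
          simp_rw [Fin.zero_succAbove]
        _ = ∏ i, ∫ s, f i s ∂μ i := by rw [Fin.prod_univ_succ]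

lemma stmt2_exists_kernel (n : ℕ) (ν : Measure ℝ) [IsFiniteMeasure ν] {K : Set ℝ}
    (hK : IsCompact K) (hν : ν Kᶜ = 0)
    (hpos : ∀ p : Polynomial ℝ, p ≠ 0 → p.natDegree ≤ n → 0 < ∫ s, Polynomial.eval s p ^ 2 ∂ν)
    (t : ℝ) :
    ∃ k : Polynomial ℝ, k.natDegree ≤ n ∧
      ∀ q : Polynomial ℝ, q.natDegree ≤ n →
        ∫ s, Polynomial.eval s q * Polynomial.eval s k ∂ν = Polynomial.eval t q := by
  classical
  set V := Polynomial.degreeLT ℝ (n + 1) with hV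
  haveI : FiniteDimensional ℝ V :=
    LinearEquiv.finiteDimensional (Polynomial.degreeLTEquiv ℝ (n + 1)).symm
  have hmem : ∀ q : Polynomial ℝ, q.natDegree ≤ n → q ∈ V := by
    intro q hq
    rw [hV, Polynomial.mem_degreeLT]
    calc q.degree ≤ (n : WithBot ℕ) := Polynomial.natDegree_le_iff_degree_le.mp hq
    _ < ((n + 1 : ℕ) : WithBot ℕ) := by exact_mod_cast Nat.lt_succ_self n
  have hdegV : ∀ q : V, (q : Polynomial ℝ).natDegree ≤ n := by
    intro q
    rcases eq_or_ne (q : Polynomial ℝ) 0 with h | h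
    · simp [h]
    · have := Polynomial.mem_degreeLT.mp q.2
      exact Nat.lt_succ_iff.mp ((Polynomial.natDegree_lt_iff_degree_lt h).mpr this)
  have hint : ∀ p q : Polynomial ℝ,
      Integrable (fun s => Polynomial.eval s p * Polynomial.eval s q) ν := fun p q =>
    stmt2_integrable_of_compact hK hν (p.continuous_aeval.mul q.continuous_aeval)
  let B : LinearMap.BilinForm ℝ V := LinearMap.mk₂ ℝ
    (fun p q => ∫ s, Polynomial.eval s (p : Polynomial ℝ) * Polynomial.eval s (q : Polynomial ℝ) ∂ν)
    (by
      intro p p' q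
      simp only [Submodule.coe_add, Polynomial.eval_add, add_mul]
      exact integral_add (hint _ _) (hint _ _))
    (by
      intro c p q
      simp only [SetLike.val_smul, Polynomial.eval_smul, smul_eq_mul, mul_assoc]
      rw [integral_const_mul])
    (by
      intro p q q'
      simp only [Submodule.coe_add, Polynomial.eval_add, mul_add]
      exact integral_add (hint _ _) (hint _ _))
    (by
      intro c p q
      simp only [SetLike.val_smul, Polynomial.eval_smul, smul_eq_mul]
      rw [show (fun s => Polynomial.eval s (p : Polynomial ℝ)
            * (c * Polynomial.eval s (q : Polynomial ℝ)))
          = fun s => c * (Polynomial.eval s (p : Polynomial ℝ)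
            * Polynomial.eval s (q : Polynomial ℝ)) by
        funext s; ring]
      rw [integral_const_mul])
  have hBapp : ∀ p q : V, B p q
      = ∫ s, Polynomial.eval s (p : Polynomial ℝ) * Polynomial.eval s (q : Polynomial ℝ) ∂ν :=
    fun p q => rfl
  have hB : B.Nondegenerate := by
    refine ⟨?_, ?_⟩
    all_goals
      intro p hp
      by_contra hne
      have hp1 : (p : Polynomial ℝ) ≠ 0 := by
        simpa [Submodule.coe_eq_zero] using hne
      have h2 := hpos (p : Polynomial ℝ) hp1 (hdegV p)
      have h3 := hp p
      rw [hBapp] at h3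
      simp_rw [← pow_two] at h3
      rw [h3] at h2
      exact lt_irrefl 0 h2
  let L : Module.Dual ℝ V :=
    { toFun := fun q => Polynomial.eval t (q : Polynomial ℝ)
      map_add' := by intro a b; simp
      map_smul' := by intro c a; simp }
  let k : V := (B.toDual hB).symm L
  have hrep : ∀ q : V, B k q = Polynomial.eval t (q : Polynomial ℝ) := fun q =>
    LinearMap.BilinForm.apply_toDual_symm_apply (B := B) (hB := hB) L q
  refine ⟨(k : Polynomial ℝ), hdegV k, ?_⟩
  intro q hq
  have := hrep ⟨q, hmem q hq⟩
  rw [hBapp] at this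
  simp only at this
  rw [← this]
  congr 1
  funext s
  ring

lemma stmt2_eval_eval₂X {d : ℕ} (y : Fin d → ℝ) (i : Fin d) (q : Polynomial ℝ) :
    eval y (Polynomial.eval₂ MvPolynomial.C (MvPolynomial.X i) q) = Polynomial.eval (y i) q := by
  rw [Polynomial.hom_eval₂]
  have h1 : (eval y).comp (MvPolynomial.C : ℝ →+* MvPolynomial (Fin d) ℝ) = RingHom.id ℝ :=
    RingHom.ext fun a => eval_C a
  rw [h1, eval_X]
  simp [Polynomial.eval, Polynomial.eval₂_eq_sum]

lemma stmt2_degreeOf_eval₂X {d : ℕ} (i j : Fin d) (q : Polynomial ℝ) :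
    degreeOf j (Polynomial.eval₂ MvPolynomial.C (MvPolynomial.X i) q)
      ≤ if i = j then q.natDegree else 0 := by
  classical
  rw [Polynomial.eval₂_eq_sum, Polynomial.sum]
  refine degreeOf_le_iff.mpr fun m hm => ?_
  obtain ⟨e, he, hm'⟩ := Finset.mem_biUnion.mp (MvPolynomial.support_sum hm)
  rw [X_pow_eq_monomial, C_mul_monomial, mul_one] at hm'
  have hms := support_monomial_subset hm'
  rw [Finset.mem_singleton] at hms
  subst hms
  rw [Finsupp.single_apply]
  by_cases h : i = j
  · simp [h, Polynomial.le_natDegree_of_mem_supp e he]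
  · simp [h]

lemma stmt2_pi_compl_null {d : ℕ} (μ : Fin d → Measure ℝ) [∀ i, IsProbabilityMeasure (μ i)]
    (K : Fin d → Set ℝ) (hKn : ∀ i, μ i (K i)ᶜ = 0) :
    Measure.pi μ (Set.pi Set.univ K)ᶜ = 0 := by
  classical
  have hsub : (Set.pi Set.univ K)ᶜ ⊆
      ⋃ i, Set.pi Set.univ (Function.update (fun _ => (Set.univ : Set ℝ)) i (K i)ᶜ) := by
    intro y hy
    simp only [Set.mem_compl_iff, Set.mem_pi, Set.mem_univ, forall_true_left, not_forall] at hy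
    obtain ⟨i, hi⟩ := hy
    refine Set.mem_iUnion.mpr ⟨i, fun j _ => ?_⟩
    by_cases h : j = i
    · subst h; simpa [Function.update_self]
    · simp [Function.update_of_ne h]
  refine measure_mono_null hsub (measure_iUnion_null fun i => ?_)
  rw [Measure.pi_pi]
  refine Finset.prod_eq_zero (Finset.mem_univ i) ?_
  simp [Function.update_self, hKn i]

end Stmt2Aux

/-- for a product of univariate probability measures, the
coordinate-wise Christoffel polynomial factorizes as the product of the
univariate Christoffel polynomials. -/
theorem stmt_2 (d n : ℕ) (μ : Fin d → Measure ℝ) [∀ i, IsProbabilityMeasure (μ i)]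
    (hcpt : ∀ i, ∃ K : Set ℝ, IsCompact K ∧ μ i Kᶜ = 0)
    (Λ : (Fin d → ℝ) → ℝ)
    (hΛ : ∀ z, (Λ z)⁻¹ = sInf {v : ℝ | ∃ p : MvPolynomial (Fin d) ℝ,
      (∀ i, p.degreeOf i ≤ n) ∧ eval z p = 1 ∧
        v = ∫ x, (eval x p) ^ 2 ∂(Measure.pi μ)})
    (hΛpos : ∀ z, 0 < Λ z)
    (lam : Fin d → ℝ → ℝ)
    (hlam : ∀ i t, (lam i t)⁻¹ = sInf {v : ℝ | ∃ p : Polynomial ℝ,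
      p.natDegree ≤ n ∧ p.eval t = 1 ∧ v = ∫ s, (p.eval s) ^ 2 ∂(μ i)})
    (hlampos : ∀ i t, 0 < lam i t) :
    ∀ x : Fin d → ℝ, Λ x = ∏ i, lam i (x i) := by
  classical
  intro x
  choose K hKc hKn using hcpt
  have hint1 : ∀ (i : Fin d) (f : ℝ → ℝ), Continuous f → Integrable f (μ i) :=
    fun i f hf => stmt2_integrable_of_compact (hKc i) (hKn i) hf
  -- positivity of the quadratic form on polynomials of degree at most n
  have hpos : ∀ (i : Fin d) (p : Polynomial ℝ), p ≠ 0 → p.natDegree ≤ n →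
      0 < ∫ s, Polynomial.eval s p ^ 2 ∂μ i := by
    intro i p hp hdeg
    obtain ⟨t₀, ht₀⟩ : ∃ t₀ : ℝ, Polynomial.eval t₀ p ≠ 0 := by
      obtain ⟨t₀, ht₀⟩ := p.exists_eval_ne_zero_of_natDegree_lt_card hp
        (lt_of_lt_of_le (Cardinal.nat_lt_aleph0 _) (Cardinal.aleph0_le_mk ℝ))
      exact ⟨t₀, ht₀⟩
    set a : ℝ := Polynomial.eval t₀ p with ha
    set q : Polynomial ℝ := Polynomial.C a⁻¹ * p with hq
    have hqdeg : q.natDegree ≤ n := le_trans (Polynomial.natDegree_C_mul_le _ _) hdeg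
    have hqev : Polynomial.eval t₀ q = 1 := by
      rw [hq, Polynomial.eval_mul, Polynomial.eval_C, ← ha]
      exact inv_mul_cancel₀ ht₀
    have hmemS : (∫ s, Polynomial.eval s q ^ 2 ∂μ i) ∈ {v : ℝ | ∃ p : Polynomial ℝ,
        p.natDegree ≤ n ∧ p.eval t₀ = 1 ∧ v = ∫ s, (p.eval s) ^ 2 ∂(μ i)} :=
      ⟨q, hqdeg, hqev, rfl⟩
    have hbdd : BddBelow {v : ℝ | ∃ p : Polynomial ℝ,
        p.natDegree ≤ n ∧ p.eval t₀ = 1 ∧ v = ∫ s, (p.eval s) ^ 2 ∂(μ i)} := by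
      refine ⟨0, ?_⟩
      rintro v ⟨p', _, _, rfl⟩
      exact integral_nonneg fun s => sq_nonneg _
    have h1 : (lam i t₀)⁻¹ ≤ ∫ s, Polynomial.eval s q ^ 2 ∂μ i := by
      rw [hlam i t₀]
      exact csInf_le hbdd hmemS
    have h3 : 0 < ∫ s, Polynomial.eval s q ^ 2 ∂μ i :=
      lt_of_lt_of_le (inv_pos.mpr (hlampos i t₀)) h1
    have hq2 : (fun s => Polynomial.eval s q ^ 2)
        = fun s => (a⁻¹) ^ 2 * Polynomial.eval s p ^ 2 := by
      funext s
      rw [hq, Polynomial.eval_mul, Polynomial.eval_C]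
      ring
    rw [hq2, integral_const_mul] at h3
    nlinarith [h3, sq_nonneg a⁻¹]
  -- reproducing kernels for each coordinate
  choose k hkdeg hkrep using fun i => stmt2_exists_kernel n (μ i) (hKc i) (hKn i) (hpos i) (x i)
  set c : Fin d → ℝ := fun i => Polynomial.eval (x i) (k i) with hc_def
  have hc : ∀ i, ∫ s, Polynomial.eval s (k i) ^ 2 ∂μ i = c i := by
    intro i
    have := hkrep i (k i) (hkdeg i)
    simpa [pow_two] using this
  have hknz : ∀ i, k i ≠ 0 := by
    intro i h
    have h1 := hkrep i 1 (by simp)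
    rw [h] at h1
    simp at h1
  have hcpos : ∀ i, 0 < c i := fun i => by
    have := hpos i (k i) (hknz i) (hkdeg i)
    rwa [hc i] at this
  -- univariate identification
  have huni : ∀ i, lam i (x i) = c i := by
    intro i
    have hbdd : BddBelow {v : ℝ | ∃ p : Polynomial ℝ,
        p.natDegree ≤ n ∧ p.eval (x i) = 1 ∧ v = ∫ s, (p.eval s) ^ 2 ∂(μ i)} := by
      refine ⟨0, ?_⟩
      rintro v ⟨p', _, _, rfl⟩
      exact integral_nonneg fun s => sq_nonneg _
    have hmemS : (c i)⁻¹ ∈ {v : ℝ | ∃ p : Polynomial ℝ,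
        p.natDegree ≤ n ∧ p.eval (x i) = 1 ∧ v = ∫ s, (p.eval s) ^ 2 ∂(μ i)} := by
      refine ⟨Polynomial.C (c i)⁻¹ * k i,
        le_trans (Polynomial.natDegree_C_mul_le _ _) (hkdeg i), ?_, ?_⟩
      · rw [Polynomial.eval_mul, Polynomial.eval_C]
        exact inv_mul_cancel₀ (hcpos i).ne'
      · have hq2 : (fun s => Polynomial.eval s (Polynomial.C (c i)⁻¹ * k i) ^ 2)
            = fun s => ((c i)⁻¹) ^ 2 * Polynomial.eval s (k i) ^ 2 := by
          funext s
          rw [Polynomial.eval_mul, Polynomial.eval_C]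
          ring
        rw [hq2, integral_const_mul, hc i, pow_two, mul_assoc,
          inv_mul_cancel₀ (hcpos i).ne', mul_one]
    have hlb : ∀ v ∈ {v : ℝ | ∃ p : Polynomial ℝ,
        p.natDegree ≤ n ∧ p.eval (x i) = 1 ∧ v = ∫ s, (p.eval s) ^ 2 ∂(μ i)}, (c i)⁻¹ ≤ v := by
      rintro v ⟨p, hdeg, hev, rfl⟩
      have h1 : ∫ s, Polynomial.eval s p * Polynomial.eval s (k i) ∂μ i = 1 := by
        rw [hkrep i p hdeg, hev]
      have hcs := stmt2_integral_cs (μ i) (fun s => Polynomial.eval s p)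
        (fun s => Polynomial.eval s (k i))
        (hint1 i _ (p.continuous_aeval.mul (k i).continuous_aeval))
        (hint1 i _ (p.continuous_aeval.pow 2))
        (hint1 i _ ((k i).continuous_aeval.pow 2))
        (by rw [hc i]; exact hcpos i)
      rw [h1, hc i, one_pow] at hcs
      rw [inv_eq_one_div, div_le_iff₀ (hcpos i)]
      linarith
    have hsInf : sInf {v : ℝ | ∃ p : Polynomial ℝ,
        p.natDegree ≤ n ∧ p.eval (x i) = 1 ∧ v = ∫ s, (p.eval s) ^ 2 ∂(μ i)} = (c i)⁻¹ :=
      le_antisymm (csInf_le hbdd hmemS) (le_csInf ⟨_, hmemS⟩ hlb)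
    refine inv_injective ?_
    rw [hlam i (x i), hsInf]
  -- multivariate kernel
  set P : MvPolynomial (Fin d) ℝ :=
    ∏ i, Polynomial.eval₂ MvPolynomial.C (MvPolynomial.X i) (k i) with hP
  have heval : ∀ y : Fin d → ℝ, eval y P = ∏ i, Polynomial.eval (y i) (k i) := by
    intro y
    rw [hP, map_prod]
    exact Finset.prod_congr rfl fun i _ => stmt2_eval_eval₂X y i (k i)
  have hPdeg : ∀ j, degreeOf j P ≤ n := by
    intro j
    rw [hP]
    refine le_trans (degreeOf_prod_le j Finset.univ _) ?_
    calc ∑ i, degreeOf j (Polynomial.eval₂ MvPolynomial.C (MvPolynomial.X i) (k i))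
        ≤ ∑ i : Fin d, if i = j then n else 0 := Finset.sum_le_sum fun i _ =>
          le_trans (stmt2_degreeOf_eval₂X i j (k i))
            (by by_cases h : i = j
                · subst h; simp [hkdeg i]
                · simp [h])
      _ ≤ n := by
          rw [Finset.sum_ite_eq' Finset.univ j fun _ => n]
          simp
  have hnull := stmt2_pi_compl_null μ K hKn
  have hKpi : IsCompact (Set.pi Set.univ K) := isCompact_univ_pi hKc
  have hint2 : ∀ f : (Fin d → ℝ) → ℝ, Continuous f → Integrable f (Measure.pi μ) :=
    fun f hf => stmt2_integrable_of_compact hKpi hnull hf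
  have hcontprod : ∀ (f : Fin d → ℝ → ℝ), (∀ i, Continuous (f i)) →
      Continuous fun y : Fin d → ℝ => ∏ i, f i (y i) :=
    fun f hf => continuous_finset_prod _ fun i _ => (hf i).comp (continuous_apply i)
  -- multivariate reproducing property
  have hrepmv : ∀ p : MvPolynomial (Fin d) ℝ, (∀ i, degreeOf i p ≤ n) →
      ∫ y, eval y p * eval y P ∂Measure.pi μ = eval x p := by
    intro p hp
    have hsupp : ∀ α ∈ p.support, ∀ i : Fin d, α i ≤ n := by
      intro α hα i
      refine le_trans ?_ (hp i)
      rw [degreeOf_eq_sup]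
      exact Finset.le_sup (f := fun m => m i) hα
    have hpt : (fun y : Fin d → ℝ => eval y p * eval y P)
        = fun y => ∑ α ∈ p.support, MvPolynomial.coeff α p
            * ∏ i, ((y i) ^ (α i) * Polynomial.eval (y i) (k i)) := by
      funext y
      rw [heval y, eval_eq', Finset.sum_mul]
      refine Finset.sum_congr rfl fun α _ => ?_
      rw [mul_assoc, ← Finset.prod_mul_distrib]
    have hswap := integral_finset_sum (μ := Measure.pi μ) p.support
      (f := fun α (y : Fin d → ℝ) => MvPolynomial.coeff α p
        * ∏ i, ((y i) ^ (α i) * Polynomial.eval (y i) (k i)))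
      (fun α _ => (hint2 _
        (continuous_const.mul (hcontprod _ fun i =>
          ((continuous_pow (α i)).mul (k i).continuous_aeval)))))
    rw [hpt, hswap]
    have hterm : ∀ α ∈ p.support,
        ∫ y, MvPolynomial.coeff α p * ∏ i, ((y i) ^ (α i) * Polynomial.eval (y i) (k i))
          ∂Measure.pi μ
        = MvPolynomial.coeff α p * ∏ i, (x i) ^ (α i) := by
      intro α hα
      rw [integral_const_mul,
        stmt2_integral_pi_prod μ (fun i s => s ^ (α i) * Polynomial.eval s (k i))]
      congr 1
      refine Finset.prod_congr rfl fun i _ => ?_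
      have := hkrep i (Polynomial.X ^ (α i)) (by simpa using hsupp α hα i)
      simpa using this
    rw [Finset.sum_congr rfl hterm, eval_eq']
  have hP2 : ∫ y, eval y P ^ 2 ∂Measure.pi μ = ∏ i, c i := by
    have hpt : (fun y : Fin d → ℝ => eval y P ^ 2)
        = fun y => ∏ i, Polynomial.eval (y i) (k i) ^ 2 := by
      funext y
      rw [heval y, ← Finset.prod_pow]
    rw [hpt, stmt2_integral_pi_prod μ (fun i s => Polynomial.eval s (k i) ^ 2)]
    exact Finset.prod_congr rfl fun i _ => hc i
  have hcP : 0 < ∏ i, c i := Finset.prod_pos fun i _ => hcpos i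
  have hevalxP : eval x P = ∏ i, c i := heval x
  -- multivariate sInf identification
  have hbdd : BddBelow {v : ℝ | ∃ p : MvPolynomial (Fin d) ℝ,
      (∀ i, p.degreeOf i ≤ n) ∧ eval x p = 1 ∧ v = ∫ y, (eval y p) ^ 2 ∂(Measure.pi μ)} := by
    refine ⟨0, ?_⟩
    rintro v ⟨p', _, _, rfl⟩
    exact integral_nonneg fun y => sq_nonneg _
  have hmemS : (∏ i, c i)⁻¹ ∈ {v : ℝ | ∃ p : MvPolynomial (Fin d) ℝ,
      (∀ i, p.degreeOf i ≤ n) ∧ eval x p = 1 ∧ v = ∫ y, (eval y p) ^ 2 ∂(Measure.pi μ)} := by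
    refine ⟨MvPolynomial.C (∏ i, c i)⁻¹ * P,
      fun j => le_trans (degreeOf_C_mul_le _ _ _) (hPdeg j), ?_, ?_⟩
    · rw [map_mul, eval_C, hevalxP]
      exact inv_mul_cancel₀ hcP.ne'
    · have hpt : (fun y : Fin d → ℝ => eval y (MvPolynomial.C (∏ i, c i)⁻¹ * P) ^ 2)
          = fun y => ((∏ i, c i)⁻¹) ^ 2 * eval y P ^ 2 := by
        funext y
        rw [map_mul, eval_C]
        ring
      rw [hpt, integral_const_mul, hP2, pow_two, mul_assoc,
        inv_mul_cancel₀ hcP.ne', mul_one]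
  have hlb : ∀ v ∈ {v : ℝ | ∃ p : MvPolynomial (Fin d) ℝ,
      (∀ i, p.degreeOf i ≤ n) ∧ eval x p = 1 ∧ v = ∫ y, (eval y p) ^ 2 ∂(Measure.pi μ)},
      (∏ i, c i)⁻¹ ≤ v := by
    rintro v ⟨p, hdeg, hev, rfl⟩
    have h1 : ∫ y, eval y p * eval y P ∂Measure.pi μ = 1 := by
      rw [hrepmv p hdeg, hev]
    have hcs := stmt2_integral_cs (Measure.pi μ) (fun y => eval y p) (fun y => eval y P)
      (hint2 _ ((p.continuous_eval).mul (P.continuous_eval)))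
      (hint2 _ ((p.continuous_eval).pow 2))
      (hint2 _ ((P.continuous_eval).pow 2))
      (by rw [hP2]; exact hcP)
    rw [h1, hP2, one_pow] at hcs
    rw [inv_eq_one_div, div_le_iff₀ hcP]
    linarith
  have hsInf : sInf {v : ℝ | ∃ p : MvPolynomial (Fin d) ℝ,
      (∀ i, p.degreeOf i ≤ n) ∧ eval x p = 1 ∧ v = ∫ y, (eval y p) ^ 2 ∂(Measure.pi μ)}
      = (∏ i, c i)⁻¹ :=
    le_antisymm (csInf_le hbdd hmemS) (le_csInf ⟨_, hmemS⟩ hlb)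
  have hfin : Λ x = ∏ i, c i := by
    refine inv_injective ?_
    rw [hΛ x, hsInf]
  rw [hfin]
  exact Finset.prod_congr rfl fun i _ => (huni i).symm
end

section
/- Let μ be a positive Borel probability measure supported on a compact set Ω ⊆ ℝ^d, and x ∉ Ω a fixed point. Then there exists α > 0 and c > 0 such that the coordinate-wise Christoffel polynomial satisfies Λ_{⊗n}^μ(x) ≥ c·exp(α·n) for all sufficiently large n. -/
open MeasureTheory MvPolynomial

/-- exponential growth of the coordinate-wise Christoffel
polynomial outside the support. -/
theorem stmt_13 (d : ℕ) (μ : Measure (Fin d → ℝ)) [IsProbabilityMeasure μ]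
    (Ω : Set (Fin d → ℝ)) (hΩ : IsCompact Ω) (hsupp : μ Ωᶜ = 0)
    (x : Fin d → ℝ) (hx : x ∉ Ω)
    (Λ : ℕ → (Fin d → ℝ) → ℝ)
    (hΛ : ∀ n z, (Λ n z)⁻¹ = sInf {v : ℝ | ∃ p : MvPolynomial (Fin d) ℝ,
      (∀ i, p.degreeOf i ≤ n) ∧ eval z p = 1 ∧ v = ∫ y, (eval y p) ^ 2 ∂μ})
    (hΛpos : ∀ n z, 0 < Λ n z) :
    ∃ α > (0 : ℝ), ∃ c > (0 : ℝ), ∃ N : ℕ, ∀ n ≥ N,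
      c * Real.exp (α * n) ≤ Λ n x := by
  -- Ω is nonempty
  have hΩne : Ω.Nonempty := by
    by_contra h
    rw [Set.not_nonempty_iff_eq_empty] at h
    rw [h, Set.compl_empty] at hsupp
    simp at hsupp
  -- distance from x to Ω
  set δ := Metric.infDist x Ω with hδdef
  have hδ : 0 < δ := (hΩ.isClosed.notMem_iff_infDist_pos hΩne).1 hx
  -- the function G and its sup on Ω
  set G : (Fin d → ℝ) → ℝ := fun y => ∑ i, (y i - x i) ^ 2 with hGdef
  have hGcont : Continuous G := by
    apply continuous_finset_sum
    intro i _
    exact ((continuous_apply i).sub continuous_const).pow 2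
  have hGnonneg : ∀ y, 0 ≤ G y := fun y => Finset.sum_nonneg fun i _ => sq_nonneg _
  have hbdd : BddAbove (G '' Ω) := (hΩ.image hGcont).bddAbove
  set M : ℝ := sSup (G '' Ω) with hMdef
  have hM : ∀ y ∈ Ω, G y ≤ M := fun y hy => le_csSup hbdd ⟨y, hy, rfl⟩
  have hM0 : 0 ≤ M := le_trans (hGnonneg hΩne.choose) (hM _ hΩne.choose_spec)
  set M' : ℝ := M + 1 with hM'def
  have hM'pos : 0 < M' := by linarith
  -- lower bound δ² ≤ G y for y ∈ Ω
  have hGlow : ∀ y ∈ Ω, δ ^ 2 ≤ G y := by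
    intro y hy
    have h1 : dist x y ≤ Real.sqrt (G y) := by
      rw [dist_pi_le_iff (Real.sqrt_nonneg _)]
      intro i
      have : (y i - x i) ^ 2 ≤ G y := by
        apply Finset.single_le_sum (f := fun i => (y i - x i) ^ 2)
          (fun j _ => sq_nonneg _) (Finset.mem_univ i)
      calc dist (x i) (y i) = Real.sqrt ((y i - x i) ^ 2) := by
            rw [Real.sqrt_sq_eq_abs, Real.dist_eq, abs_sub_comm]
        _ ≤ Real.sqrt (G y) := Real.sqrt_le_sqrt this
    have h2 : δ ≤ dist x y := Metric.infDist_le_dist_of_mem hy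
    have h3 : δ ≤ Real.sqrt (G y) := le_trans h2 h1
    calc δ ^ 2 ≤ Real.sqrt (G y) ^ 2 := by
          apply pow_le_pow_left₀ hδ.le h3
      _ = G y := Real.sq_sqrt (hGnonneg y)
  have hδM : δ ^ 2 ≤ M := le_trans (hGlow _ hΩne.choose_spec) (hM _ hΩne.choose_spec)
  -- the ratio r
  set r : ℝ := 1 - δ ^ 2 / M' with hrdef
  have hr0 : 0 < r := by
    have h : δ ^ 2 / M' < 1 := (div_lt_one hM'pos).2 (by linarith)
    rw [hrdef]; linarith
  have hr1 : r < 1 := by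
    have h : 0 < δ ^ 2 / M' := div_pos (by positivity) hM'pos
    rw [hrdef]; linarith
  -- the polynomial q
  set g : MvPolynomial (Fin d) ℝ := ∑ i, (X i - C (x i)) ^ 2 with hgdef
  set q : MvPolynomial (Fin d) ℝ := 1 - C (M'⁻¹) * g with hqdef
  have hqeval : ∀ y, eval y q = 1 - M'⁻¹ * G y := by
    intro y
    simp [hqdef, hgdef, hGdef]
  have hqx : eval x q = 1 := by
    rw [hqeval]
    simp [hGdef]
  have hq0 : ∀ y ∈ Ω, 0 ≤ eval y q := by
    intro y hy
    rw [hqeval]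
    have h1 : G y ≤ M' := le_trans (hM y hy) (by linarith)
    have h2 : M'⁻¹ * G y ≤ M'⁻¹ * M' := by
      apply mul_le_mul_of_nonneg_left h1 (inv_nonneg.2 hM'pos.le)
    rw [inv_mul_cancel₀ hM'pos.ne'] at h2
    linarith
  have hqr : ∀ y ∈ Ω, eval y q ≤ r := by
    intro y hy
    rw [hqeval, hrdef]
    have h1 : δ ^ 2 ≤ G y := hGlow y hy
    have h2 : M'⁻¹ * δ ^ 2 ≤ M'⁻¹ * G y :=
      mul_le_mul_of_nonneg_left h1 (inv_nonneg.2 hM'pos.le)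
    rw [div_eq_inv_mul]
    linarith
  have hqdeg : q.totalDegree ≤ 2 := by
    rw [hqdef, sub_eq_add_neg]
    apply le_trans (totalDegree_add _ _)
    apply max_le
    · simp [totalDegree_one]
    · rw [totalDegree_neg]
      apply le_trans (totalDegree_mul _ _)
      rw [totalDegree_C, zero_add]
      apply le_trans (totalDegree_finset_sum _ _)
      apply Finset.sup_le
      intro i _
      apply le_trans (totalDegree_pow _ _)
      have : (X i - C (x i) : MvPolynomial (Fin d) ℝ).totalDegree ≤ 1 := by
        rw [sub_eq_add_neg]
        apply le_trans (totalDegree_add _ _)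
        apply max_le
        · exact le_of_eq (totalDegree_X i)
        · rw [totalDegree_neg, totalDegree_C]; omega
      omega
  -- main estimate
  refine ⟨Real.log r⁻¹, Real.log_pos ((one_lt_inv₀ hr0).2 hr1), r, hr0, 1, ?_⟩
  intro n hn
  set k := n / 2 with hkdef
  set p : MvPolynomial (Fin d) ℝ := q ^ k with hpdef
  have hAE : ∀ᵐ y ∂μ, y ∈ Ω := by
    rw [MeasureTheory.ae_iff]
    exact hsupp
  have hbound : ∀ y ∈ Ω, (eval y p) ^ 2 ≤ r ^ (2 * k) := by
    intro y hy
    rw [hpdef]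
    have : (eval y (q ^ k)) ^ 2 = (eval y q) ^ (2 * k) := by
      rw [map_pow, ← pow_mul, mul_comm]
    rw [this]
    exact pow_le_pow_left₀ (hq0 y hy) (hqr y hy) _
  have hcont : Continuous fun y => (eval y p) ^ 2 :=
    (MvPolynomial.continuous_eval p).pow 2
  have hint : Integrable (fun y => (eval y p) ^ 2) μ := by
    apply Integrable.mono' (integrable_const (r ^ (2 * k))) hcont.aestronglyMeasurable
    filter_upwards [hAE] with y hy
    rw [Real.norm_eq_abs, abs_of_nonneg (sq_nonneg _)]
    exact hbound y hy
  have hintle : ∫ y, (eval y p) ^ 2 ∂μ ≤ r ^ (2 * k) := by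
    calc ∫ y, (eval y p) ^ 2 ∂μ ≤ ∫ _, r ^ (2 * k) ∂μ := by
          apply integral_mono_ae hint (integrable_const _)
          filter_upwards [hAE] with y hy using hbound y hy
      _ = r ^ (2 * k) := by simp
  have hmem : (∫ y, (eval y p) ^ 2 ∂μ) ∈ {v : ℝ | ∃ p : MvPolynomial (Fin d) ℝ,
      (∀ i, p.degreeOf i ≤ n) ∧ eval x p = 1 ∧ v = ∫ y, (eval y p) ^ 2 ∂μ} := by
    refine ⟨p, ?_, ?_, rfl⟩
    · intro i
      apply le_trans (degreeOf_le_totalDegree _ i)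
      apply le_trans (totalDegree_pow _ _)
      have := hqdeg
      have h2k : 2 * k ≤ n := by omega
      calc k * q.totalDegree ≤ k * 2 := Nat.mul_le_mul_left k hqdeg
        _ ≤ n := by omega
    · rw [hpdef, map_pow, hqx, one_pow]
  have hbddS : BddBelow {v : ℝ | ∃ p : MvPolynomial (Fin d) ℝ,
      (∀ i, p.degreeOf i ≤ n) ∧ eval x p = 1 ∧ v = ∫ y, (eval y p) ^ 2 ∂μ} := by
    refine ⟨0, fun v hv => ?_⟩
    obtain ⟨p', _, _, rfl⟩ := hv
    exact integral_nonneg fun y => sq_nonneg _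
  have hinv : (Λ n x)⁻¹ ≤ r ^ (2 * k) := by
    rw [hΛ n x]
    exact le_trans (csInf_le hbddS hmem) hintle
  have hΛge : (r ^ (2 * k))⁻¹ ≤ Λ n x := by
    have h1 : 0 < (Λ n x)⁻¹ := inv_pos.2 (hΛpos n x)
    calc (r ^ (2 * k))⁻¹ ≤ ((Λ n x)⁻¹)⁻¹ := inv_anti₀ h1 hinv
      _ = Λ n x := inv_inv _
  -- now compare with r * exp(log r⁻¹ * n)
  have hexp : Real.exp (Real.log r⁻¹ * n) = (r⁻¹) ^ n := by
    rw [mul_comm, Real.exp_nat_mul, Real.exp_log (inv_pos.2 hr0)]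
  rw [hexp]
  have h1le : 1 ≤ r⁻¹ := ((one_lt_inv₀ hr0).2 hr1).le
  have hchain : r * r⁻¹ ^ n ≤ r⁻¹ ^ (2 * k) := by
    have hn1 : r * r⁻¹ ^ n = r⁻¹ ^ (n - 1) := by
      obtain ⟨m, rfl⟩ : ∃ m, n = m + 1 := ⟨n - 1, by omega⟩
      rw [pow_succ']
      rw [← mul_assoc, mul_inv_cancel₀ hr0.ne', one_mul]
      simp
    rw [hn1]
    exact pow_le_pow_right₀ h1le (by omega)
  calc r * r⁻¹ ^ n ≤ r⁻¹ ^ (2 * k) := hchain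
    _ = (r ^ (2 * k))⁻¹ := by rw [inv_pow]
    _ ≤ Λ n x := hΛge
end
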